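/- arXiv:1504.00100 — 5 statements merged into one kernel-verified Lean document; each statement's English description precedes it below -/
import Mathlib

section
/- Let A and B be unital C*-algebras, P₁ a nontrivial projection in A, P₂ = 1 - P₁, η a nonzero complex number with |η| ≠ 1, and Φ : A → B a bijective map with Φ(0) = 0 preserving the Jordan η*-product for P ∈ {P₁, P₂}. Then for every A₁₁ ∈ P₁AP₁ and D₂₂ ∈ P₂AP₂, one has Φ(A₁₁ + D₂₂) = Φ(A₁₁) + Φ(D₂₂). -/
variable {A B : Type*}
  [NormedRing A] [StarRing A] [CStarRing A] [NormedAlgebra ℂ A] [StarModule ℂ A] [CompleteSpace A]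
  [NormedRing B] [StarRing B] [CStarRing B] [NormedAlgebra ℂ B] [StarModule ℂ B] [CompleteSpace B]

lemma eta_cancel {A : Type*} [NormedRing A] [StarRing A] [NormedAlgebra ℂ A] [StarModule ℂ A]
    (η : ℂ) (hη1 : ‖η‖ ≠ 1) (Z : A) (h : Z + η • star Z = 0) : Z = 0 := by
  have h1 : Z = -(η • star Z) := eq_neg_of_add_eq_zero_left h
  have h2 : star Z = -((starRingEnd ℂ η) • Z) := by
    conv_lhs => rw [h1]
    rw [star_neg, star_smul, star_star]
    rfl
  have h3 : Z = (η * starRingEnd ℂ η) • Z := by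
    conv_lhs => rw [h1, h2]
    rw [smul_neg, neg_neg, smul_smul]
  have h5 : (1 : ℂ) - η * starRingEnd ℂ η ≠ 0 := by
    intro hc
    have hc1 : η * starRingEnd ℂ η = 1 := (sub_eq_zero.mp hc).symm
    rw [Complex.mul_conj] at hc1
    have : Complex.normSq η = 1 := by exact_mod_cast hc1
    have hn : ‖η‖ ^ 2 = 1 := by
      rw [Complex.sq_norm]; exact this
    have : ‖η‖ = 1 := by nlinarith [norm_nonneg η]
    exact hη1 this
  have h4 : ((1 : ℂ) - η * starRingEnd ℂ η) • Z = 0 := by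
    rw [sub_smul, one_smul, ← h3, sub_self]
  have := congrArg (fun x => ((1 : ℂ) - η * starRingEnd ℂ η)⁻¹ • x) h4
  simpa [inv_smul_smul₀ h5] using this

theorem stmt3 (η : ℂ) (hη : η ≠ 0) (hη1 : ‖η‖ ≠ 1) (P₁ : A)
    (hP : star P₁ = P₁) (hP2 : P₁ * P₁ = P₁) (hP0 : P₁ ≠ 0) (hP1 : P₁ ≠ 1)
    (Φ : A → B) (hbij : Function.Bijective Φ) (h0 : Φ 0 = 0)
    (hΦ : ∀ X : A, ∀ P ∈ ({P₁, 1 - P₁} : Set A),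
      Φ (X * P + η • (P * star X)) = Φ X * Φ P + η • (Φ P * star (Φ X)))
    (A₁₁ D₂₂ : A) (hA : P₁ * A₁₁ * P₁ = A₁₁) (hD : (1 - P₁) * D₂₂ * (1 - P₁) = D₂₂) :
    Φ (A₁₁ + D₂₂) = Φ A₁₁ + Φ D₂₂ := by
  have memP₁ : P₁ ∈ ({P₁, 1 - P₁} : Set A) := Set.mem_insert _ _
  have memP₂ : (1 - P₁) ∈ ({P₁, 1 - P₁} : Set A) := Set.mem_insert_of_mem _ rfl
  -- algebraic facts
  have hP2' : (1 - P₁) * (1 - P₁) = 1 - P₁ := by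
    rw [sub_mul, one_mul, mul_sub, mul_one, hP2]; abel
  have hortho : P₁ * (1 - P₁) = 0 := by rw [mul_sub, mul_one, hP2, sub_self]
  have hortho' : (1 - P₁) * P₁ = 0 := by rw [sub_mul, one_mul, hP2, sub_self]
  have hAs : P₁ * star A₁₁ * P₁ = star A₁₁ := by
    have := congrArg star hA
    rwa [star_mul, star_mul, hP, ← mul_assoc] at this
  have hDs : (1 - P₁) * star D₂₂ * (1 - P₁) = star D₂₂ := by
    have := congrArg star hD
    rwa [star_mul, star_mul, star_sub, star_one, hP, ← mul_assoc] at this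
  have hA1 : A₁₁ * P₁ = A₁₁ := by
    conv_lhs => rw [← hA]
    rw [mul_assoc, hP2, hA]
  have hA2 : P₁ * star A₁₁ = star A₁₁ := by
    conv_lhs => rw [← hAs]
    rw [← mul_assoc, ← mul_assoc, hP2, hAs]
  have hA1' : A₁₁ * (1 - P₁) = 0 := by
    conv_lhs => rw [← hA]
    rw [mul_assoc, hortho, mul_zero]
  have hA2' : (1 - P₁) * star A₁₁ = 0 := by
    conv_lhs => rw [← hAs]
    rw [← mul_assoc, ← mul_assoc, hortho', zero_mul, zero_mul]
  have hD1 : D₂₂ * P₁ = 0 := by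
    conv_lhs => rw [← hD]
    rw [mul_assoc, hortho', mul_zero]
  have hD2 : P₁ * star D₂₂ = 0 := by
    conv_lhs => rw [← hDs]
    rw [← mul_assoc, ← mul_assoc, hortho, zero_mul, zero_mul]
  have hD1' : D₂₂ * (1 - P₁) = D₂₂ := by
    conv_lhs => rw [← hD]
    rw [mul_assoc, hP2', hD]
  have hD2' : (1 - P₁) * star D₂₂ = star D₂₂ := by
    conv_lhs => rw [← hDs]
    rw [← mul_assoc, ← mul_assoc, hP2', hDs]
  obtain ⟨S, hS⟩ := hbij.2 (Φ A₁₁ + Φ D₂₂)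
  -- the P₁ equation
  have hΦA := hΦ A₁₁ P₁ memP₁
  have hΦD := hΦ D₂₂ P₁ memP₁
  have hΦS := hΦ S P₁ memP₁
  rw [hA1, hA2] at hΦA
  rw [hD1, hD2, smul_zero, add_zero, h0] at hΦD
  rw [hS] at hΦS
  have e1 : S * P₁ + η • (P₁ * star S) = A₁₁ + η • star A₁₁ := by
    apply hbij.1
    rw [hΦS, hΦA, star_add, add_mul, mul_add, smul_add]
    have hz : Φ D₂₂ * Φ P₁ + η • (Φ P₁ * star (Φ D₂₂)) = 0 := hΦD.symm
    calc Φ A₁₁ * Φ P₁ + Φ D₂₂ * Φ P₁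
          + (η • (Φ P₁ * star (Φ A₁₁)) + η • (Φ P₁ * star (Φ D₂₂)))
        = (Φ A₁₁ * Φ P₁ + η • (Φ P₁ * star (Φ A₁₁)))
          + (Φ D₂₂ * Φ P₁ + η • (Φ P₁ * star (Φ D₂₂))) := by abel
      _ = Φ A₁₁ * Φ P₁ + η • (Φ P₁ * star (Φ A₁₁)) := by rw [hz, add_zero]
  -- the P₂ equation
  have hΦA' := hΦ A₁₁ (1 - P₁) memP₂
  have hΦD' := hΦ D₂₂ (1 - P₁) memP₂
  have hΦS' := hΦ S (1 - P₁) memP₂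
  rw [hA1', hA2', smul_zero, add_zero, h0] at hΦA'
  rw [hD1', hD2'] at hΦD'
  rw [hS] at hΦS'
  have e2 : S * (1 - P₁) + η • ((1 - P₁) * star S) = D₂₂ + η • star D₂₂ := by
    apply hbij.1
    rw [hΦS', hΦD', star_add, add_mul, mul_add, smul_add]
    have hz : Φ A₁₁ * Φ (1 - P₁) + η • (Φ (1 - P₁) * star (Φ A₁₁)) = 0 := hΦA'.symm
    calc Φ A₁₁ * Φ (1 - P₁) + Φ D₂₂ * Φ (1 - P₁)
          + (η • (Φ (1 - P₁) * star (Φ A₁₁)) + η • (Φ (1 - P₁) * star (Φ D₂₂)))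
        = (Φ D₂₂ * Φ (1 - P₁) + η • (Φ (1 - P₁) * star (Φ D₂₂)))
          + (Φ A₁₁ * Φ (1 - P₁) + η • (Φ (1 - P₁) * star (Φ A₁₁))) := by abel
      _ = Φ D₂₂ * Φ (1 - P₁) + η • (Φ (1 - P₁) * star (Φ D₂₂)) := by rw [hz, add_zero]
  -- sum
  have h1 : S * P₁ + S * (1 - P₁) = S := by rw [← mul_add]; simp
  have h2 : η • (P₁ * star S) + η • ((1 - P₁) * star S) = η • star S := by
    rw [← smul_add, ← add_mul]; simp
  have e3 : S + η • star S = (A₁₁ + D₂₂) + η • star (A₁₁ + D₂₂) := by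
    have hsum : (S * P₁ + η • (P₁ * star S)) + (S * (1 - P₁) + η • ((1 - P₁) * star S))
        = (A₁₁ + η • star A₁₁) + (D₂₂ + η • star D₂₂) := by rw [e1, e2]
    rw [show (S * P₁ + η • (P₁ * star S)) + (S * (1 - P₁) + η • ((1 - P₁) * star S))
        = (S * P₁ + S * (1 - P₁)) + (η • (P₁ * star S) + η • ((1 - P₁) * star S)) from by abel,
      h1, h2] at hsum
    rw [hsum, star_add, smul_add]; abel
  have hZ : (S - (A₁₁ + D₂₂)) + η • star (S - (A₁₁ + D₂₂)) = 0 := by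
    have hd : (S + η • star S) - ((A₁₁ + D₂₂) + η • star (A₁₁ + D₂₂)) = 0 := by
      rw [e3]; simp
    calc (S - (A₁₁ + D₂₂)) + η • star (S - (A₁₁ + D₂₂))
        = (S + η • star S) - ((A₁₁ + D₂₂) + η • star (A₁₁ + D₂₂)) := by
          rw [star_sub, smul_sub]; abel
      _ = 0 := hd
  have hSeq : S = A₁₁ + D₂₂ := sub_eq_zero.mp (eta_cancel η hη1 _ hZ)
  rw [← hSeq, hS]
end

section
/- Let A and B be unital C*-algebras, P₁ a nontrivial projection in A, P₂ = 1 - P₁, η a nonzero complex number with |η| ≠ 1, and Φ : A → B a bijective map with Φ(0) = 0 preserving the Jordan η*-product for P ∈ {P₁, P₂}. Then for every B₁₂ ∈ P₁AP₂ and C₂₁ ∈ P₂AP₁, one has Φ(B₁₂ + C₂₁) = Φ(B₁₂) + Φ(C₂₁). -/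
variable {A B : Type*}
  [NormedRing A] [StarRing A] [CStarRing A] [NormedAlgebra ℂ A] [StarModule ℂ A] [CompleteSpace A]
  [NormedRing B] [StarRing B] [CStarRing B] [NormedAlgebra ℂ B] [StarModule ℂ B] [CompleteSpace B]

private lemma aux_corner {A : Type*} [Ring A] (P₁ : A) (hP2 : P₁ * P₁ = P₁)
    (x : A) (hx : P₁ * x * (1 - P₁) = x) :
    P₁ * x = x ∧ x * P₁ = 0 := by
  constructor
  · conv_lhs => rw [← hx]
    rw [← mul_assoc, ← mul_assoc, hP2]
    exact hx
  · rw [← hx, mul_assoc, sub_mul, one_mul, hP2, sub_self, mul_zero]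

private lemma aux_corner' {A : Type*} [Ring A] (P₁ : A) (hP2 : P₁ * P₁ = P₁)
    (x : A) (hx : (1 - P₁) * x * P₁ = x) :
    x * P₁ = x ∧ P₁ * x = 0 := by
  constructor
  · conv_lhs => rw [← hx]
    rw [mul_assoc, hP2]
    exact hx
  · rw [← hx, ← mul_assoc, ← mul_assoc, mul_sub, mul_one, hP2, sub_self, zero_mul, zero_mul]

private lemma aux_key {A : Type*}
    [NormedRing A] [StarRing A] [NormedAlgebra ℂ A] [StarModule ℂ A]
    (η : ℂ) (hη1 : ‖η‖ ≠ 1) (x : A) (hx : x + η • star x = 0) : x = 0 := by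
  have h2 : star x + (starRingEnd ℂ η) • x = 0 := by
    have := congrArg star hx
    simpa [star_add, star_smul] using this
  have h3 : star x = -((starRingEnd ℂ η) • x) := eq_neg_of_add_eq_zero_left h2
  rw [h3] at hx
  have h4 : (1 - η * starRingEnd ℂ η) • x = 0 := by
    rw [sub_smul, one_smul, mul_smul, sub_eq_add_neg, ← smul_neg]
    exact hx
  have h5 : (1 - η * starRingEnd ℂ η) ≠ 0 := by
    intro h
    have h6 : η * starRingEnd ℂ η = 1 := by linear_combination -h
    have h7 : (Complex.normSq η : ℂ) = 1 := by rw [← Complex.mul_conj]; exact h6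
    have h8 : Complex.normSq η = 1 := by exact_mod_cast h7
    have h9 : ‖η‖ ^ 2 = 1 := by
      rw [Complex.sq_norm]; exact h8
    have := norm_nonneg η
    apply hη1
    nlinarith
  exact (smul_eq_zero.mp h4).resolve_left h5

theorem stmt4 (η : ℂ) (hη : η ≠ 0) (hη1 : ‖η‖ ≠ 1) (P₁ : A)
    (hP : star P₁ = P₁) (hP2 : P₁ * P₁ = P₁) (hP0 : P₁ ≠ 0) (hP1 : P₁ ≠ 1)
    (Φ : A → B) (hbij : Function.Bijective Φ) (h0 : Φ 0 = 0)
    (hΦ : ∀ X : A, ∀ P ∈ ({P₁, 1 - P₁} : Set A),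
      Φ (X * P + η • (P * star X)) = Φ X * Φ P + η • (Φ P * star (Φ X)))
    (B₁₂ C₂₁ : A) (hB : P₁ * B₁₂ * (1 - P₁) = B₁₂) (hC : (1 - P₁) * C₂₁ * P₁ = C₂₁) :
    Φ (B₁₂ + C₂₁) = Φ B₁₂ + Φ C₂₁ := by
  obtain ⟨hinj, hsurj⟩ := hbij
  have hmem1 : P₁ ∈ ({P₁, 1 - P₁} : Set A) := Set.mem_insert _ _
  have hmem2 : (1 - P₁) ∈ ({P₁, 1 - P₁} : Set A) := Set.mem_insert_iff.mpr (Or.inr rfl)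
  -- idempotent helpers
  have hQ2 : (1 - P₁) * (1 - P₁) = 1 - P₁ := by
    rw [sub_mul, one_mul, mul_sub, mul_one, hP2]; abel
  have hP2' : ∀ x : A, P₁ * (P₁ * x) = P₁ * x := fun x => by rw [← mul_assoc, hP2]
  have hQ2' : ∀ x : A, (1 - P₁) * ((1 - P₁) * x) = (1 - P₁) * x := fun x => by
    rw [← mul_assoc, hQ2]
  have h12' : ∀ x : A, P₁ * ((1 - P₁) * x) = 0 := fun x => by
    rw [← mul_assoc, mul_sub, mul_one, hP2, sub_self, zero_mul]
  have h21' : ∀ x : A, (1 - P₁) * (P₁ * x) = 0 := fun x => by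
    rw [← mul_assoc, sub_mul, one_mul, hP2, sub_self, zero_mul]
  -- corner facts
  obtain ⟨hB_l, hB_r⟩ := aux_corner P₁ hP2 B₁₂ hB
  obtain ⟨hC_r, hC_l⟩ := aux_corner' P₁ hP2 C₂₁ hC
  have hBs : (1 - P₁) * star B₁₂ * P₁ = star B₁₂ := by
    conv_rhs => rw [← hB]
    rw [star_mul, star_mul, hP, star_sub, star_one, hP, mul_assoc]
  have hCs : P₁ * star C₂₁ * (1 - P₁) = star C₂₁ := by
    conv_rhs => rw [← hC]
    rw [star_mul, star_mul, hP, star_sub, star_one, hP, mul_assoc]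
  obtain ⟨hBs_r, hBs_l⟩ := aux_corner' P₁ hP2 (star B₁₂) hBs
  obtain ⟨hCs_l, hCs_r⟩ := aux_corner P₁ hP2 (star C₂₁) hCs
  have hB_r2 : B₁₂ * (1 - P₁) = B₁₂ := by rw [mul_sub, mul_one, hB_r, sub_zero]
  have hB_l2 : (1 - P₁) * B₁₂ = 0 := by rw [sub_mul, one_mul, hB_l, sub_self]
  have hC_l2 : (1 - P₁) * C₂₁ = C₂₁ := by rw [sub_mul, one_mul, hC_l, sub_zero]
  have hBs_r2 : star B₁₂ * (1 - P₁) = 0 := by rw [mul_sub, mul_one, hBs_r, sub_self]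
  have hCs_r2 : star C₂₁ * (1 - P₁) = star C₂₁ := by rw [mul_sub, mul_one, hCs_r, sub_zero]
  -- the four basic equations
  have eB1 : Φ B₁₂ * Φ P₁ + η • (Φ P₁ * star (Φ B₁₂)) = 0 := by
    have := hΦ B₁₂ P₁ hmem1
    rw [hB_r, hBs_l, smul_zero, add_zero, h0] at this
    exact this.symm
  have eB2 : Φ (B₁₂ + η • star B₁₂)
      = Φ B₁₂ * Φ (1 - P₁) + η • (Φ (1 - P₁) * star (Φ B₁₂)) := by
    have := hΦ B₁₂ (1 - P₁) hmem2
    rw [hB_r2] at this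
    rw [show (1 - P₁) * star B₁₂ = star B₁₂ by
      rw [sub_mul, one_mul, hBs_l, sub_zero]] at this
    exact this
  have eC1 : Φ (C₂₁ + η • star C₂₁)
      = Φ C₂₁ * Φ P₁ + η • (Φ P₁ * star (Φ C₂₁)) := by
    have := hΦ C₂₁ P₁ hmem1
    rw [hC_r, hCs_l] at this
    exact this
  have eC2 : Φ C₂₁ * Φ (1 - P₁) + η • (Φ (1 - P₁) * star (Φ C₂₁)) = 0 := by
    have := hΦ C₂₁ (1 - P₁) hmem2
    rw [show C₂₁ * (1 - P₁) = 0 by rw [mul_sub, mul_one, hC_r, sub_self]] at this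
    rw [show (1 - P₁) * star C₂₁ = 0 by
      rw [sub_mul, one_mul, hCs_l, sub_self]] at this
    rw [smul_zero, add_zero, h0] at this
    exact this.symm
  -- choose T
  obtain ⟨T, hT⟩ := hsurj (Φ B₁₂ + Φ C₂₁)
  have eq1 : T * P₁ + η • (P₁ * star T) = C₂₁ + η • star C₂₁ := by
    apply hinj
    rw [hΦ T P₁ hmem1, hT]
    have : (Φ B₁₂ + Φ C₂₁) * Φ P₁ + η • (Φ P₁ * star (Φ B₁₂ + Φ C₂₁))
        = (Φ B₁₂ * Φ P₁ + η • (Φ P₁ * star (Φ B₁₂)))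
          + (Φ C₂₁ * Φ P₁ + η • (Φ P₁ * star (Φ C₂₁))) := by
      simp only [add_mul, mul_add, star_add, smul_add]
      abel
    rw [this, eB1, zero_add, ← eC1]
  have eq2 : T * (1 - P₁) + η • ((1 - P₁) * star T) = B₁₂ + η • star B₁₂ := by
    apply hinj
    rw [hΦ T (1 - P₁) hmem2, hT]
    have : (Φ B₁₂ + Φ C₂₁) * Φ (1 - P₁) + η • (Φ (1 - P₁) * star (Φ B₁₂ + Φ C₂₁))
        = (Φ B₁₂ * Φ (1 - P₁) + η • (Φ (1 - P₁) * star (Φ B₁₂)))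
          + (Φ C₂₁ * Φ (1 - P₁) + η • (Φ (1 - P₁) * star (Φ C₂₁))) := by
      simp only [add_mul, mul_add, star_add, smul_add]
      abel
    rw [this, eC2, add_zero, ← eB2]
  -- sandwich eq1 with P₁ _ P₁
  have k11 : P₁ * (T * P₁) = 0 := by
    have h := congrArg (fun z => P₁ * (z * P₁)) eq1
    simp only [add_mul, mul_add, smul_mul_assoc, mul_smul_comm, mul_assoc, hP2, hP2',
      hC_r, hC_l, hCs_r, mul_zero, smul_zero, add_zero, zero_add] at h
    apply aux_key η hη1
    rw [show star (P₁ * (T * P₁)) = P₁ * (star T * P₁) by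
      simp only [star_mul, hP, mul_assoc]]
    exact h
  -- sandwich eq1 with (1-P₁) _ P₁
  have k21 : (1 - P₁) * (T * P₁) = C₂₁ := by
    have h := congrArg (fun z => (1 - P₁) * (z * P₁)) eq1
    simp only [add_mul, mul_add, smul_mul_assoc, mul_smul_comm, mul_assoc, hP2, h21',
      hC_r, hC_l2, hCs_r, mul_zero, smul_zero, add_zero, zero_add] at h
    exact h
  -- sandwich eq2 with P₁ _ (1-P₁)
  have k12 : P₁ * (T * (1 - P₁)) = B₁₂ := by
    have h := congrArg (fun z => P₁ * (z * (1 - P₁))) eq2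
    simp only [add_mul, mul_add, smul_mul_assoc, mul_smul_comm, mul_assoc, hQ2, h12',
      hB_r2, hB_l, hBs_r2, mul_zero, smul_zero, add_zero, zero_add] at h
    exact h
  -- sandwich eq2 with (1-P₁) _ (1-P₁)
  have k22 : (1 - P₁) * (T * (1 - P₁)) = 0 := by
    have h := congrArg (fun z => (1 - P₁) * (z * (1 - P₁))) eq2
    simp only [add_mul, mul_add, smul_mul_assoc, mul_smul_comm, mul_assoc, hQ2, hQ2',
      hB_r2, hB_l2, hBs_r2, mul_zero, smul_zero, add_zero, zero_add, zero_mul] at h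
    apply aux_key η hη1
    rw [show star ((1 - P₁) * (T * (1 - P₁))) = (1 - P₁) * (star T * (1 - P₁)) by
      simp only [star_mul, star_sub, star_one, hP, mul_assoc]]
    exact h
  -- assemble
  have hTval : T = B₁₂ + C₂₁ := by
    have hsplit : T = P₁ * (T * P₁) + P₁ * (T * (1 - P₁)) + (1 - P₁) * (T * P₁)
        + (1 - P₁) * (T * (1 - P₁)) := by
      noncomm_ring
    rw [hsplit, k11, k12, k21, k22, zero_add, add_zero]
  rw [← hTval, hT]
end

section
/- Let A and B be unital C*-algebras, P₁ a nontrivial projection in A, P₂ = 1 - P₁, η a nonzero complex number with |η| ≠ 1, and Φ : A → B a bijective map with Φ(0) = 0 preserving the Jordan η*-product for P ∈ {P₁, P₂}. Then for every A₁₁ ∈ P₁AP₁ and B₁₂ ∈ P₁AP₂, one has Φ(A₁₁ + B₁₂) = Φ(A₁₁) + Φ(B₁₂). -/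
variable {A B : Type*}
  [NormedRing A] [StarRing A] [CStarRing A] [NormedAlgebra ℂ A] [StarModule ℂ A] [CompleteSpace A]
  [NormedRing B] [StarRing B] [CStarRing B] [NormedAlgebra ℂ B] [StarModule ℂ B] [CompleteSpace B]

lemma eta_key {A : Type*} [Ring A] [StarRing A] [Module ℂ A] [StarModule ℂ A]
    (η : ℂ) (hη1 : ‖η‖ ≠ 1) (X : A) (h : X + η • star X = 0) : X = 0 := by
  have h' := congrArg star h
  simp only [star_add, star_smul, star_star, star_zero] at h'
  have hs : star X = -((starRingEnd ℂ) η • X) := by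
    have : (starRingEnd ℂ) η • X + star X = 0 := by rwa [add_comm] at h'
    linear_combination (norm := module) this
  rw [hs, smul_neg, smul_smul] at h
  have h2 : (1 - η * (starRingEnd ℂ) η) • X = 0 := by
    have : X - (η * (starRingEnd ℂ) η) • X = 0 := by linear_combination (norm := module) h
    rw [sub_smul, one_smul]; exact this
  have hne : (1 - η * (starRingEnd ℂ) η) ≠ 0 := by
    intro hc
    have hns : (Complex.normSq η : ℂ) = 1 := by
      rw [← Complex.mul_conj η]; linear_combination -hc
    have hns' : Complex.normSq η = 1 := by exact_mod_cast hns
    have habs : ‖η‖ ^ 2 = 1 := by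
      rw [Complex.sq_norm, hns']
    have hnn : (0:ℝ) ≤ ‖η‖ := norm_nonneg η
    rcases lt_or_gt_of_ne hη1 with hl | hl <;> nlinarith
  exact (smul_eq_zero.mp h2).resolve_left hne

theorem stmt5 (η : ℂ) (hη : η ≠ 0) (hη1 : ‖η‖ ≠ 1) (P₁ : A)
    (hP : star P₁ = P₁) (hP2 : P₁ * P₁ = P₁) (hP0 : P₁ ≠ 0) (hP1 : P₁ ≠ 1)
    (Φ : A → B) (hbij : Function.Bijective Φ) (h0 : Φ 0 = 0)
    (hΦ : ∀ X : A, ∀ P ∈ ({P₁, 1 - P₁} : Set A),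
      Φ (X * P + η • (P * star X)) = Φ X * Φ P + η • (Φ P * star (Φ X)))
    (A₁₁ B₁₂ : A) (hA : P₁ * A₁₁ * P₁ = A₁₁) (hB : P₁ * B₁₂ * (1 - P₁) = B₁₂) :
    Φ (A₁₁ + B₁₂) = Φ A₁₁ + Φ B₁₂ := by
  have mem1 : P₁ ∈ ({P₁, 1 - P₁} : Set A) := Set.mem_insert _ _
  have mem2 : (1 - P₁) ∈ ({P₁, 1 - P₁} : Set A) := Set.mem_insert_of_mem _ rfl
  -- Peirce facts for A₁₁
  have hA1 : A₁₁ * P₁ = A₁₁ := by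
    calc A₁₁ * P₁ = P₁ * A₁₁ * P₁ * P₁ := by rw [hA]
      _ = P₁ * A₁₁ * (P₁ * P₁) := by noncomm_ring
      _ = A₁₁ := by rw [hP2, hA]
  have hA2 : P₁ * A₁₁ = A₁₁ := by
    calc P₁ * A₁₁ = P₁ * (P₁ * A₁₁ * P₁) := by rw [hA]
      _ = (P₁ * P₁) * A₁₁ * P₁ := by noncomm_ring
      _ = A₁₁ := by rw [hP2, hA]
  have hAs : star A₁₁ * P₁ = star A₁₁ := by
    have := congrArg star hA2
    rwa [star_mul, hP] at this
  have hAs2 : P₁ * star A₁₁ = star A₁₁ := by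
    have := congrArg star hA1
    rwa [star_mul, hP] at this
  -- Peirce facts for B₁₂
  have hB1 : P₁ * B₁₂ = B₁₂ := by
    calc P₁ * B₁₂ = P₁ * (P₁ * B₁₂ * (1 - P₁)) := by rw [hB]
      _ = (P₁ * P₁) * B₁₂ * (1 - P₁) := by noncomm_ring
      _ = B₁₂ := by rw [hP2, hB]
  have hB2 : B₁₂ * P₁ = 0 := by
    calc B₁₂ * P₁ = P₁ * B₁₂ * (1 - P₁) * P₁ := by rw [hB]
      _ = P₁ * B₁₂ * (P₁ - P₁ * P₁) := by noncomm_ring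
      _ = 0 := by rw [hP2, sub_self, mul_zero]
  have hBstar : (1 - P₁) * (star B₁₂ * P₁) = star B₁₂ := by
    have := congrArg star hB
    rwa [star_mul, star_mul, star_sub, star_one, hP] at this
  have hBs1 : star B₁₂ * P₁ = star B₁₂ := by
    calc star B₁₂ * P₁ = ((1 - P₁) * (star B₁₂ * P₁)) * P₁ := by rw [hBstar]
      _ = (1 - P₁) * (star B₁₂ * (P₁ * P₁)) := by noncomm_ring
      _ = star B₁₂ := by rw [hP2, hBstar]
  have hBs2 : P₁ * star B₁₂ = 0 := by
    calc P₁ * star B₁₂ = P₁ * ((1 - P₁) * (star B₁₂ * P₁)) := by rw [hBstar]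
      _ = (P₁ - P₁ * P₁) * (star B₁₂ * P₁) := by noncomm_ring
      _ = 0 := by rw [hP2, sub_self, zero_mul]
  -- the circle products
  have cA1 : A₁₁ * P₁ + η • (P₁ * star A₁₁) = A₁₁ + η • star A₁₁ := by rw [hA1, hAs2]
  have cA2 : A₁₁ * (1 - P₁) + η • ((1 - P₁) * star A₁₁) = 0 := by
    rw [mul_sub, mul_one, hA1, sub_self, sub_mul, one_mul, hAs2, sub_self, smul_zero, add_zero]
  have cB1 : B₁₂ * P₁ + η • (P₁ * star B₁₂) = 0 := by
    rw [hB2, hBs2, smul_zero, add_zero]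
  have cB2 : B₁₂ * (1 - P₁) + η • ((1 - P₁) * star B₁₂) = B₁₂ + η • star B₁₂ := by
    rw [mul_sub, mul_one, hB2, sub_zero, sub_mul, one_mul, hBs2, sub_zero]
  -- choose T with Φ T = Φ A₁₁ + Φ B₁₂
  obtain ⟨T, hT⟩ := hbij.surjective (Φ A₁₁ + Φ B₁₂)
  -- equation with P₁
  have e1 : T * P₁ + η • (P₁ * star T) = A₁₁ + η • star A₁₁ := by
    apply hbij.injective
    rw [hΦ T P₁ mem1, hT, ← cA1, hΦ A₁₁ P₁ mem1]
    have hB0 : Φ B₁₂ * Φ P₁ + η • (Φ P₁ * star (Φ B₁₂)) = 0 := by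
      have := hΦ B₁₂ P₁ mem1
      rw [cB1, h0] at this
      exact this.symm
    rw [star_add, add_mul, mul_add, smul_add]
    calc Φ A₁₁ * Φ P₁ + Φ B₁₂ * Φ P₁ +
          (η • (Φ P₁ * star (Φ A₁₁)) + η • (Φ P₁ * star (Φ B₁₂)))
        = (Φ A₁₁ * Φ P₁ + η • (Φ P₁ * star (Φ A₁₁))) +
            (Φ B₁₂ * Φ P₁ + η • (Φ P₁ * star (Φ B₁₂))) := by abel
      _ = Φ A₁₁ * Φ P₁ + η • (Φ P₁ * star (Φ A₁₁)) := by rw [hB0, add_zero]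
  -- equation with 1 - P₁
  have e2 : T * (1 - P₁) + η • ((1 - P₁) * star T) = B₁₂ + η • star B₁₂ := by
    apply hbij.injective
    rw [hΦ T (1 - P₁) mem2, hT, ← cB2, hΦ B₁₂ (1 - P₁) mem2]
    have hA0 : Φ A₁₁ * Φ (1 - P₁) + η • (Φ (1 - P₁) * star (Φ A₁₁)) = 0 := by
      have := hΦ A₁₁ (1 - P₁) mem2
      rw [cA2, h0] at this
      exact this.symm
    rw [star_add, add_mul, mul_add, smul_add]
    calc Φ A₁₁ * Φ (1 - P₁) + Φ B₁₂ * Φ (1 - P₁) +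
          (η • (Φ (1 - P₁) * star (Φ A₁₁)) + η • (Φ (1 - P₁) * star (Φ B₁₂)))
        = (Φ B₁₂ * Φ (1 - P₁) + η • (Φ (1 - P₁) * star (Φ B₁₂))) +
            (Φ A₁₁ * Φ (1 - P₁) + η • (Φ (1 - P₁) * star (Φ A₁₁))) := by abel
      _ = Φ B₁₂ * Φ (1 - P₁) + η • (Φ (1 - P₁) * star (Φ B₁₂)) := by rw [hA0, add_zero]
  -- sum the two equations
  have esum : T + η • star T = (A₁₁ + B₁₂) + η • star (A₁₁ + B₁₂) := by
    have hsum := congrArg₂ (fun x y => x + y) e1 e2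
    calc T + η • star T
        = (T * P₁ + η • (P₁ * star T)) + (T * (1 - P₁) + η • ((1 - P₁) * star T)) := by
          rw [mul_sub, mul_one, sub_mul, one_mul, smul_sub]; abel
      _ = (A₁₁ + η • star A₁₁) + (B₁₂ + η • star B₁₂) := hsum
      _ = (A₁₁ + B₁₂) + η • star (A₁₁ + B₁₂) := by rw [star_add, smul_add]; abel
  have hTe : T = A₁₁ + B₁₂ := by
    have hS : (T - (A₁₁ + B₁₂)) + η • star (T - (A₁₁ + B₁₂)) = 0 := by
      rw [star_sub, smul_sub]
      have : T + η • star T - ((A₁₁ + B₁₂) + η • star (A₁₁ + B₁₂)) = 0 := by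
        rw [esum, sub_self]
      linear_combination (norm := module) this
    exact sub_eq_zero.mp (eta_key η hη1 _ hS)
  rw [← hTe]
  exact hT
end

section
/- Let A and B be unital C*-algebras, P₁ a nontrivial projection in A, P₂ = 1 - P₁, η a nonzero complex number with |η| ≠ 1, and Φ : A → B a bijective unital map (Φ(1) = 1) with Φ(0) = 0 preserving the Jordan η*-product for P ∈ {P₁, P₂}. Then Φ(P₁) and Φ(P₂) are self-adjoint idempotents (projections) in B. -/
variable {A B : Type*}
  [NormedRing A] [StarRing A] [CStarRing A] [NormedAlgebra ℂ A] [StarModule ℂ A] [CompleteSpace A]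
  [NormedRing B] [StarRing B] [CStarRing B] [NormedAlgebra ℂ B] [StarModule ℂ B] [CompleteSpace B]

theorem stmt11 (η : ℂ) (hη : η ≠ 0) (hη1 : ‖η‖ ≠ 1) (P₁ : A)
    (hP : star P₁ = P₁) (hP2 : P₁ * P₁ = P₁) (hP0 : P₁ ≠ 0) (hP1 : P₁ ≠ 1)
    (Φ : A → B) (hbij : Function.Bijective Φ) (h0 : Φ 0 = 0)
    (hΦ : ∀ X : A, ∀ P ∈ ({P₁, 1 - P₁} : Set A),
      Φ (X * P + η • (P * star X)) = Φ X * Φ P + η • (Φ P * star (Φ X)))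
    (hunital : Φ 1 = 1)
    (hΦ1 : ∀ X : A, Φ (X * 1 + η • (1 * star X)) = Φ X * Φ 1 + η • (Φ 1 * star (Φ X))) :
    (star (Φ P₁) = Φ P₁ ∧ Φ P₁ * Φ P₁ = Φ P₁) ∧
      (star (Φ (1 - P₁)) = Φ (1 - P₁) ∧ Φ (1 - P₁) * Φ (1 - P₁) = Φ (1 - P₁)) := by
  have hηm1 : (1 : ℂ) + η ≠ 0 := by
    intro h
    apply hη1
    have : η = -1 := by linear_combination h
    rw [this]
    simp
  have key : ∀ P ∈ ({P₁, 1 - P₁} : Set A), star P = P → P * P = P →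
      star (Φ P) = Φ P ∧ Φ P * Φ P = Φ P := by
    intro P hmem hs hi
    have h1 := hΦ 1 P hmem
    rw [one_mul, star_one, mul_one, hunital, one_mul, star_one, mul_one] at h1
    have h2 := hΦ1 P
    rw [mul_one, one_mul, hs, hunital, mul_one, one_mul] at h2
    have hstar : star (Φ P) = Φ P := by
      have := h2.symm.trans h1
      have h3 : η • star (Φ P) = η • Φ P := by
        have := add_left_cancel this
        exact this
      exact smul_right_injective B hη h3
    refine ⟨hstar, ?_⟩
    have h3 := hΦ P P hmem
    rw [hi, hs, hi, hstar] at h3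
    have := h3.symm.trans h1
    have h4 : (1 + η) • (Φ P * Φ P) = (1 + η) • Φ P := by
      rw [add_smul, add_smul, one_smul, one_smul]
      exact this
    exact smul_right_injective B hηm1 h4
  have hmem1 : P₁ ∈ ({P₁, 1 - P₁} : Set A) := Set.mem_insert _ _
  have hmem2 : (1 - P₁) ∈ ({P₁, 1 - P₁} : Set A) := Set.mem_insert_iff.mpr (Or.inr rfl)
  refine ⟨key P₁ hmem1 hP hP2, key (1 - P₁) hmem2 ?_ ?_⟩
  · rw [star_sub, star_one, hP]
  · rw [sub_mul, one_mul, mul_sub, mul_one, hP2]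
    abel
end

section
/- Let A and B be unital C*-algebras, P₁ a nontrivial projection in A, P₂ = 1 - P₁, η a nonzero complex number with |η| ≠ 1, and Φ : A → B a bijective unital map with Φ(0) = 0 preserving the Jordan η*-product for P ∈ {P₁, P₂} and satisfying Φ(X •_η 1) = Φ(X) •_η Φ(1) for all X. Then Φ(X·P_i) = Φ(X)·Φ(P_i) for all X ∈ A and i = 1, 2. -/
variable {A B : Type*}
  [NormedRing A] [StarRing A] [CStarRing A] [NormedAlgebra ℂ A] [StarModule ℂ A] [CompleteSpace A]
  [NormedRing B] [StarRing B] [CStarRing B] [NormedAlgebra ℂ B] [StarModule ℂ B] [CompleteSpace B]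

/-- Injectivity of `T ↦ T + η • star T` when `‖η‖ ≠ 1`. -/
lemma aux_inj {B : Type*} [NormedRing B] [StarRing B] [NormedAlgebra ℂ B] [StarModule ℂ B]
    (η : ℂ) (hη1 : ‖η‖ ≠ 1) {T S : B}
    (h : T + η • star T = S + η • star S) : T = S := by
  set D := T - S with hD
  have hzero : D + η • star D = 0 := by
    rw [hD, star_sub, smul_sub]
    rw [← sub_eq_zero] at h
    linear_combination (norm := module) h
  have hstarD : star D = -(star η • D) := by
    have h2 := congrArg star hzero
    simp only [star_add, star_smul, star_star, star_zero] at h2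
    rw [← sub_eq_zero]
    linear_combination (norm := module) h2
  rw [hstarD, smul_neg, smul_smul] at hzero
  have h3 : (1 - η * star η) • D = 0 := by
    rw [sub_smul, one_smul]
    linear_combination (norm := module) hzero
  have hne : (1 - η * star η) ≠ 0 := by
    intro hc
    apply hη1
    have h4 : η * star η = 1 := by linear_combination -hc
    have h5 : (Complex.normSq η : ℂ) = 1 := by
      rw [← Complex.mul_conj]; exact h4
    have h6 : Complex.normSq η = 1 := by exact_mod_cast h5
    have h7 : ‖η‖ ^ 2 = 1 := by
      rw [Complex.sq_norm] at *
      exact h6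
    nlinarith [norm_nonneg η]
  rcases smul_eq_zero.mp h3 with h | h
  · exact absurd h hne
  · exact sub_eq_zero.mp h

theorem stmt13 (η : ℂ) (hη : η ≠ 0) (hη1 : ‖η‖ ≠ 1) (P₁ : A)
    (hP : star P₁ = P₁) (hP2 : P₁ * P₁ = P₁) (hP0 : P₁ ≠ 0) (hP1 : P₁ ≠ 1)
    (Φ : A → B) (hbij : Function.Bijective Φ) (h0 : Φ 0 = 0)
    (hΦ : ∀ X : A, ∀ P ∈ ({P₁, 1 - P₁} : Set A),
      Φ (X * P + η • (P * star X)) = Φ X * Φ P + η • (Φ P * star (Φ X)))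
    (hunital : Φ 1 = 1)
    (hΦ1 : ∀ X : A, Φ (X * 1 + η • (1 * star X)) = Φ X * Φ 1 + η • (Φ 1 * star (Φ X))) :
    ∀ X : A, ∀ P ∈ ({P₁, 1 - P₁} : Set A), Φ (X * P) = Φ X * Φ P := by
  intro X P hPmem
  -- P is self-adjoint
  have hPstar : star P = P := by
    rcases hPmem with h | h
    · rw [h]; exact hP
    · simp only [Set.mem_singleton_iff] at h
      rw [h]; simp [hP]
  -- Φ P is self-adjoint
  have hΦPstar : star (Φ P) = Φ P := by
    have h1 := hΦ1 P
    simp only [hunital, mul_one, one_mul, hPstar] at h1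
    have h2 := hΦ 1 P hPmem
    simp only [hunital, one_mul, mul_one, star_one] at h2
    -- h1 : Φ (P + η • P) = Φ P + η • star (Φ P)
    -- h2 : Φ (P + η • P) = Φ P + η • Φ P
    have h3 : Φ P + η • star (Φ P) = Φ P + η • Φ P := h1.symm.trans h2
    have h4 : η • star (Φ P) = η • Φ P := by
      have := add_left_cancel h3
      exact this
    exact smul_right_injective B hη h4
  -- main identity
  have h5 := hΦ1 (X * P)
  simp only [hunital, mul_one, one_mul] at h5
  rw [star_mul, hPstar] at h5
  -- h5 : Φ (X * P + η • (P * star X)) = Φ (X * P) + η • star (Φ (X * P))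
  have h6 := hΦ X P hPmem
  have h7 : Φ (X * P) + η • star (Φ (X * P)) = Φ X * Φ P + η • star (Φ X * Φ P) := by
    rw [← h5, h6, star_mul, hΦPstar]
  exact aux_inj η hη1 h7
end
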